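/- GTSP relaxation yields a lower bound for the MT-TSP: let each target i have its time-windows partitioned into trajectory-intervals (nodes), grouped into clusters C_i, and let the directed graph G on the depot and all nodes have edge costs ℓ_{pq} satisfying ℓ_{pq} ≤ (SFT cost from node p to node q) for every edge. Then for any feasible MT-TSP tour visiting targets in order i₁, …, i_n at times t₁ ≤ … ≤ t_n with total tour duration t_tour, the sequence of visited nodes is a feasible GTSP tour in G whose total edge cost is at most t_tour; hence the optimal GTSP cost is a lower bound on the optimal MT-TSP tour duration. -/

import Mathlib

open Set

theorem stmt11
    (n : ℕ) (hn : 1 ≤ n)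
    (π : ℕ → ℝ → EuclideanSpace ℝ (Fin 2))
    (d : EuclideanSpace ℝ (Fin 2)) (vmax : ℝ) (hvmax : 0 < vmax)
    (a b : ℕ → ℝ) (t : ℕ → ℝ) (ttour : ℝ)
    (ht : ∀ k, 1 ≤ k → k ≤ n → t k ∈ Set.Icc (a k) (b k))
    (hfeas0 : 0 ≤ t 1 ∧ ‖π 1 (t 1) - d‖ ≤ vmax * (t 1 - 0))
    (hfeas : ∀ k, 1 ≤ k → k < n →
      t k ≤ t (k + 1) ∧
        ‖π (k + 1) (t (k + 1)) - π k (t k)‖ ≤ vmax * (t (k + 1) - t k))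
    (hfeasn : t n ≤ ttour ∧ ‖d - π n (t n)‖ ≤ vmax * (ttour - t n))
    (ℓ0 ℓn : ℝ) (ℓ : ℕ → ℝ)
    (hℓ0 : ℓ0 ≤ sInf {c : ℝ | ∃ t' ∈ Set.Icc (a 1) (b 1),
        (0 ≤ t' ∧ ‖π 1 t' - d‖ ≤ vmax * (t' - 0)) ∧ c = t' - 0})
    (hℓ : ∀ k, 1 ≤ k → k < n →
      ℓ k ≤ sInf {c : ℝ | ∃ s ∈ Set.Icc (a k) (b k),
        ∃ s' ∈ Set.Icc (a (k + 1)) (b (k + 1)),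
        (s ≤ s' ∧ ‖π (k + 1) s' - π k s‖ ≤ vmax * (s' - s)) ∧ c = s' - s})
    (hℓn : ℓn ≤ sInf {c : ℝ | ∃ s ∈ Set.Icc (a n) (b n), ∃ s' : ℝ,
        (s ≤ s' ∧ ‖d - π n s‖ ≤ vmax * (s' - s)) ∧ c = s' - s}) :
    ℓ0 + (∑ k ∈ Finset.Ico 1 n, ℓ k) + ℓn ≤ ttour := by
  have h0 : ℓ0 ≤ t 1 - 0 := by
    refine hℓ0.trans (csInf_le ⟨0, ?_⟩ ?_)
    · rintro c ⟨t', _, ⟨h1, _⟩, rfl⟩; linarith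
    · exact ⟨t 1, ht 1 le_rfl hn, hfeas0, rfl⟩
  have hk : ∀ k ∈ Finset.Ico 1 n, ℓ k ≤ t (k + 1) - t k := by
    intro k hk
    rw [Finset.mem_Ico] at hk
    refine (hℓ k hk.1 hk.2).trans (csInf_le ⟨0, ?_⟩ ?_)
    · rintro c ⟨s, _, s', _, ⟨h1, _⟩, rfl⟩; linarith
    · exact ⟨t k, ht k hk.1 hk.2.le, t (k + 1), ht (k + 1) (le_trans hk.1 (Nat.le_succ k)) hk.2,
        hfeas k hk.1 hk.2, rfl⟩
  have hend : ℓn ≤ ttour - t n := by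
    refine hℓn.trans (csInf_le ⟨0, ?_⟩ ?_)
    · rintro c ⟨s, _, s', ⟨h1, _⟩, rfl⟩; linarith
    · exact ⟨t n, ht n hn le_rfl, ttour, hfeasn, rfl⟩
  have hsum : (∑ k ∈ Finset.Ico 1 n, ℓ k) ≤ ∑ k ∈ Finset.Ico 1 n, (t (k + 1) - t k) :=
    Finset.sum_le_sum hk
  have htel : ∀ m, 1 ≤ m → (∑ k ∈ Finset.Ico 1 m, (t (k + 1) - t k)) = t m - t 1 := by
    intro m hm
    induction m, hm using Nat.le_induction with
    | base => simp
    | succ p hp ih => rw [Finset.sum_Ico_succ_top hp, ih]; ring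
  linarith [hsum.trans_eq (htel n hn)]
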